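/- An operator S ∈ B(ℓ²(T)) is a constant (i.e., both S and S* are causal) if and only if Sχ_t lies in the closed linear span of {χ_s : s ≍ t} for every node t ∈ T. -/

import Mathlib

open scoped InnerProductSpace ENNReal
open ContinuousLinearMap (adjoint)

noncomputable section

namespace Multiscale

/-- A homogeneous tree of order `q` with a distinguished boundary point `∞`,
encoded by the `q` primitive shift maps (the right action `t ↦ t·αⱼ`, giving the
`q` successors of a node) together with the parent map (the first step of the
unique path from a node towards the boundary point `∞`).  The axioms say:
the shifts are jointly injective, `t·αⱼ` has parent `t`, every node is a
successor of its parent, the parent map has no cycles (acyclicity of the tree)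
and the paths from any two nodes to `∞` eventually merge (connectedness and the
choice of one common boundary point). -/
structure HomTree (q : ℕ) (T : Type) where
  shift : Fin q → T → T
  parent : T → T
  shift_inj : ∀ i j s t, shift i s = shift j t → i = j ∧ s = t
  parent_shift : ∀ j t, parent (shift j t) = t
  shift_parent : ∀ t, ∃ j, shift j (parent t) = t
  acyclic : ∀ t n, parent^[n] t = t → n = 0
  connected : ∀ s t, ∃ m n, parent^[m] s = parent^[n] t

variable {q : ℕ} {T : Type} [DecidableEq T]

/-- The partial order `s ⪯ t` induced by the boundary point:
`dist(s, s ∧ t) ≤ dist(t, s ∧ t)`. -/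
def HomTree.ple (S : HomTree q T) (s t : T) : Prop :=
  ∃ m n, m ≤ n ∧ S.parent^[m] s = S.parent^[n] t

/-- The horocycle equivalence `s ≍ t` : `dist(s, s ∧ t) = dist(t, s ∧ t)`. -/
def HomTree.horo (S : HomTree q T) (s t : T) : Prop :=
  ∃ n, S.parent^[n] s = S.parent^[n] t

/-- The right action `t ↦ t·w` of a word `w ∈ F_q` on the tree. -/
def HomTree.act (S : HomTree q T) : List (Fin q) → T → T
  | [], t => t
  | i :: w, t => S.act w (S.shift i t)

/-- `ℓ²(T)`. -/
abbrev L2 (T : Type) : Type := lp (fun _ : T => ℂ) 2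

/-- The operator on `ℓ²` associated with a word `w ∈ F_q`, built from the
operators of the primitive shifts: `(w f)(t) = f(t·w)`. -/
def wordOp {q : ℕ} {H : Type} [NormedAddCommGroup H] [NormedSpace ℂ H]
    (A : Fin q → (H →L[ℂ] H)) : List (Fin q) → (H →L[ℂ] H)
  | [] => 1
  | i :: w => A i ∘L wordOp A w

/-- A bounded operator on `ℓ²(T)` is causal if whenever `f` vanishes on
`{t : t ⪯ s}` so does `Xf`. -/
def Causal (S : HomTree q T) (X : L2 T →L[ℂ] L2 T) : Prop :=
  ∀ s : T, ∀ f : L2 T, (∀ t, S.ple t s → f t = 0) → ∀ t, S.ple t s → X f t = 0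

/-- A constant: both `X` and `X*` are causal. -/
def IsConst (S : HomTree q T) (X : L2 T →L[ℂ] L2 T) : Prop :=
  Causal S X ∧ Causal S (adjoint X)

/-- Diagonal with respect to the standard basis `χ_t`. -/
def IsDiagonal (X : L2 T →L[ℂ] L2 T) : Prop :=
  ∀ t : T, ∃ a : ℂ, X (lp.single 2 t 1) = a • lp.single 2 t 1

/-- A pair of words of `F_q` is irreducible if it is not of the form
`(αᵢ v₁, αᵢ v₂)`. -/
def Irred {q : ℕ} (w₁ w₂ : List (Fin q)) : Prop :=
  ¬ ∃ (i : Fin q) (v₁ v₂ : List (Fin q)), w₁ = i :: v₁ ∧ w₂ = i :: v₂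

/-- Membership in the Hilbert--Schmidt class: `trace (X*X) = Σ_t ‖X χ_t‖² < ∞`. -/
def HSSummable (X : L2 T →L[ℂ] L2 T) : Prop :=
  Summable fun t : T => ‖X (lp.single 2 t 1)‖ ^ 2

/-- The Hilbert--Schmidt norm `‖X‖₂ = (trace (X*X))^{1/2}`. -/
def hsNorm (X : L2 T →L[ℂ] L2 T) : ℝ :=
  Real.sqrt (∑' t : T, ‖X (lp.single 2 t 1)‖ ^ 2)

/-- The Hilbert--Schmidt inner product `⟨X, Y⟩₂ = trace (Y* X)`
(linear in `X`, conjugate-linear in `Y`). -/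
def hsInner (X Y : L2 T →L[ℂ] L2 T) : ℂ :=
  ∑' t : T, ⟪Y (lp.single 2 t 1), X (lp.single 2 t 1)⟫_ℂ


/-! ### Auxiliary lemmas -/

lemma eval_eq_inner (t : T) (f : L2 T) : ⟪lp.single 2 t (1:ℂ), f⟫_ℂ = f t := by
  rw [lp.inner_single_left]; simp [RCLike.inner_apply]

lemma eval_eq_inner' (t : T) (f : L2 T) :
    ⟪f, lp.single 2 t (1:ℂ)⟫_ℂ = starRingEnd ℂ (f t) := by
  rw [lp.inner_single_right]; simp [RCLike.inner_apply]

lemma single_smul_one (s : T) (a : ℂ) :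
    lp.single 2 s a = (a • lp.single 2 s (1:ℂ) : L2 T) := by
  have := lp.single_smul (E := fun _ : T => ℂ) 2 s a (1:ℂ)
  rw [smul_eq_mul, mul_one] at this
  exact this

lemma hasSum_sing (f : L2 T) : HasSum (fun s : T => lp.single 2 s (f s)) f :=
  lp.hasSum_single (by norm_num) f

lemma HomTree.ple_refl (S : HomTree q T) (t : T) : S.ple t t :=
  ⟨0, 0, le_refl 0, rfl⟩

lemma HomTree.horo_symm (S : HomTree q T) {s t : T} (h : S.horo s t) : S.horo t s := by
  obtain ⟨n, hn⟩ := h; exact ⟨n, hn.symm⟩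

lemma HomTree.ple_of_horo_ple (S : HomTree q T) {u t s : T}
    (h1 : S.horo u t) (h2 : S.ple t s) : S.ple u s := by
  obtain ⟨k, hk⟩ := h1
  obtain ⟨m, n, hmn, h⟩ := h2
  refine ⟨m + k, n + k, by omega, ?_⟩
  calc S.parent^[m + k] u = S.parent^[m] (S.parent^[k] u) := Function.iterate_add_apply _ _ _ _
    _ = S.parent^[m] (S.parent^[k] t) := by rw [hk]
    _ = S.parent^[m + k] t := (Function.iterate_add_apply _ _ _ _).symm
    _ = S.parent^[k + m] t := by rw [Nat.add_comm]
    _ = S.parent^[k] (S.parent^[m] t) := Function.iterate_add_apply _ _ _ _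
    _ = S.parent^[k] (S.parent^[n] s) := by rw [h]
    _ = S.parent^[k + n] s := (Function.iterate_add_apply _ _ _ _).symm
    _ = S.parent^[n + k] s := by rw [Nat.add_comm]

lemma HomTree.horo_of_ple_ple (S : HomTree q T) {s t : T}
    (h1 : S.ple s t) (h2 : S.ple t s) : S.horo s t := by
  obtain ⟨a, b, hab, h1⟩ := h1
  obtain ⟨c, d, hcd, h2⟩ := h2
  have e1 : S.parent^[c + a] s = S.parent^[c + b] t := by
    rw [Function.iterate_add_apply, h1, ← Function.iterate_add_apply]
  have e2 : S.parent^[b + c] t = S.parent^[b + d] s := by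
    rw [Function.iterate_add_apply, h2, ← Function.iterate_add_apply]
  have e3 : S.parent^[b + d] s = S.parent^[c + a] s := by
    rw [← e2, Nat.add_comm b c, ← e1]
  have e4 : S.parent^[(b + d) - (c + a)] (S.parent^[c + a] s) = S.parent^[c + a] s := by
    rw [← Function.iterate_add_apply]
    have h5 : (b + d) - (c + a) + (c + a) = b + d := by omega
    rw [h5, e3]
  have h6 := S.acyclic _ _ e4
  have hab2 : a = b := by omega
  exact ⟨b, hab2 ▸ h1⟩

lemma HomTree.ple_total (S : HomTree q T) (s t : T) : S.ple s t ∨ S.ple t s := by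
  obtain ⟨m, n, h⟩ := S.connected s t
  rcases le_or_gt m n with hle | hlt
  · exact Or.inl ⟨m, n, hle, h⟩
  · exact Or.inr ⟨n, m, hlt.le, h.symm⟩

lemma mem_closure_span_iff (P : T → Prop) (f : L2 T) :
    f ∈ closure (Submodule.span ℂ {g : L2 T | ∃ s, P s ∧ g = lp.single 2 s 1} :
        Set (L2 T)) ↔ ∀ s, ¬ P s → f s = 0 := by
  constructor
  · intro hf s hs
    set φ : L2 T →L[ℂ] ℂ := innerSL ℂ (lp.single 2 s (1:ℂ)) with hφ
    have hA : {g : L2 T | ∃ u, P u ∧ g = lp.single 2 u 1} ⊆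
        (LinearMap.ker (φ : L2 T →ₗ[ℂ] ℂ) : Set (L2 T)) := by
      rintro g ⟨u, hu, rfl⟩
      have hsu : s ≠ u := fun h => hs (h ▸ hu)
      have : φ (lp.single 2 u (1:ℂ)) = (lp.single 2 u (1:ℂ) : L2 T) s := by
        rw [hφ]; exact eval_eq_inner s _
      simp only [SetLike.mem_coe, LinearMap.mem_ker, ContinuousLinearMap.coe_coe]
      rw [this, lp.single_apply_ne (E := fun _ : T => ℂ) 2 u (1:ℂ) hsu]
    have hker : closure (Submodule.span ℂ
        {g : L2 T | ∃ u, P u ∧ g = lp.single 2 u 1} : Set (L2 T)) ⊆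
        (LinearMap.ker (φ : L2 T →ₗ[ℂ] ℂ) : Set (L2 T)) := by
      apply closure_minimal
      · exact_mod_cast SetLike.coe_subset_coe.mpr (Submodule.span_le.mpr hA)
      · exact ContinuousLinearMap.isClosed_ker φ
    have := hker hf
    simp only [SetLike.mem_coe, LinearMap.mem_ker, ContinuousLinearMap.coe_coe] at this
    rw [hφ] at this
    simpa only [innerSL_apply_apply, eval_eq_inner] using this
  · intro h
    have hs := hasSum_sing f
    refine mem_closure_of_tendsto hs (Filter.Eventually.of_forall fun F => ?_)
    refine Submodule.sum_mem _ fun u _ => ?_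
    by_cases hu : P u
    · rw [single_smul_one]
      exact Submodule.smul_mem _ _ (Submodule.subset_span ⟨u, hu, rfl⟩)
    · rw [h u hu, single_smul_one, zero_smul]
      exact zero_mem _

lemma causal_of_entries {S : HomTree q T} {X : L2 T →L[ℂ] L2 T}
    (M : ∀ u v : T, ¬ S.horo u v → X (lp.single 2 v 1) u = 0) : Causal S X := by
  intro s f hf t hts
  have hsum := hasSum_sing f
  set φ : L2 T →L[ℂ] ℂ := (innerSL ℂ (lp.single 2 t (1:ℂ))).comp X with hφ
  have h2 : HasSum (fun u => φ (lp.single 2 u (f u))) (φ f) := φ.hasSum hsum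
  have h3 : ∀ u, φ (lp.single 2 u (f u)) = 0 := by
    intro u
    by_cases ht : S.horo t u
    · have hfu : f u = 0 := hf u (S.ple_of_horo_ple (S.horo_symm ht) hts)
      rw [hfu, single_smul_one, zero_smul, map_zero]
    · have heq : φ (lp.single 2 u (f u)) = f u * (X (lp.single 2 u 1) t) := by
        rw [hφ]
        simp only [ContinuousLinearMap.comp_apply, innerSL_apply_apply]
        rw [single_smul_one u (f u), map_smul, inner_smul_right, eval_eq_inner]
      rw [heq, M t u ht, mul_zero]
  have h4 : φ f = 0 := by
    have hzero : HasSum (fun _ : T => (0:ℂ)) (φ f) := by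
      simpa only [h3] using h2
    simpa using hzero.unique hasSum_zero
  have h5 : φ f = X f t := by rw [hφ]; exact eval_eq_inner t (X f)
  rw [← h5]; exact h4

/-- An operator `X` on `ℓ²(T)` is a constant (both `X` and `X*`
are causal) if and only if `X χ_t` lies in the closed linear span of
`{χ_s : s ≍ t}` for every node `t`. -/
theorem const_iff_horocycle_span {q : ℕ} (hq : 1 ≤ q) {T : Type} [DecidableEq T]
    (S : HomTree q T) (X : L2 T →L[ℂ] L2 T) :
    IsConst S X ↔ ∀ t : T, X (lp.single 2 t 1) ∈
      closure (Submodule.span ℂ {g : L2 T | ∃ s, S.horo s t ∧ g = lp.single 2 s 1} :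
        Set (L2 T)) := by
  have key : ∀ t : T, (X (lp.single 2 t 1) ∈
      closure (Submodule.span ℂ {g : L2 T | ∃ s, S.horo s t ∧ g = lp.single 2 s 1} :
        Set (L2 T))) ↔ ∀ s, ¬ S.horo s t → X (lp.single 2 t 1) s = 0 :=
    fun t => mem_closure_span_iff (fun s => S.horo s t) _
  constructor
  · rintro ⟨hX, hXstar⟩ t
    rw [key]
    intro s hst
    rcases S.ple_total s t with hplest | hplets
    · have hnts : ¬ S.ple t s := fun hh => hst (S.horo_of_ple_ple hplest hh)
      apply hX s (lp.single 2 t 1) ?_ s (S.ple_refl s)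
      intro v hv
      by_cases hvt : v = t
      · exact absurd (hvt ▸ hv) hnts
      · exact lp.single_apply_ne (E := fun _ : T => ℂ) 2 t (1:ℂ) hvt
    · have hnst : ¬ S.ple s t := fun hh => hst (S.horo_of_ple_ple hh hplets)
      have hz : adjoint X (lp.single 2 s 1) t = 0 := by
        apply hXstar t (lp.single 2 s 1) ?_ t (S.ple_refl t)
        intro v hv
        by_cases hvs : v = s
        · exact absurd (hvs ▸ hv) hnst
        · exact lp.single_apply_ne (E := fun _ : T => ℂ) 2 s (1:ℂ) hvs
      have h1 : (X (lp.single 2 t 1)) s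
          = ⟪lp.single 2 s (1:ℂ), X (lp.single 2 t 1)⟫_ℂ := (eval_eq_inner _ _).symm
      rw [h1, ← ContinuousLinearMap.adjoint_inner_left X (lp.single 2 t 1) (lp.single 2 s 1), eval_eq_inner', hz, map_zero]
  · intro h
    have M : ∀ u v : T, ¬ S.horo u v → X (lp.single 2 v 1) u = 0 :=
      fun u v huv => ((key v).mp (h v)) u huv
    refine ⟨causal_of_entries M, causal_of_entries ?_⟩
    intro u v huv
    rw [← eval_eq_inner, ContinuousLinearMap.adjoint_inner_right, eval_eq_inner',
      M v u (fun hh => huv (S.horo_symm hh)), map_zero]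
end Multiscale
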